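/- The threaded circuit partition of a 4-regular plane graph admits a consistent alternating under-over assignment: an assignment of ±1 to each thread such that the two threads at each vertex receive opposite values, and consecutive threads along each threaded circuit receive opposite values. -/

import Mathlib

set_option linter.unusedSectionVars false
open Equiv Relation

section Aux
variable {D : Type} [Fintype D] [DecidableEq D]

def orbSet (r : D → D → Prop) : Set (Set D) := {s | ∃ d, s = {e | r d e}}

noncomputable def cc (π : Equiv.Perm D) : ℕ := (orbSet π.SameCycle).ncard

lemma pow_mul_fix (π : Equiv.Perm D) (b : D) (p : ℕ) (hp : (π ^ p) b = b) (q : ℕ) :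
    (π ^ (p * q)) b = b := by
  induction q with
  | zero => simp
  | succ q ih => rw [Nat.mul_succ, pow_add, Equiv.Perm.mul_apply, hp, ih]

lemma pow_mod_apply (π : Equiv.Perm D) (b : D) (p : ℕ) (hp : (π ^ p) b = b) (i : ℕ) :
    (π ^ i) b = (π ^ (i % p)) b := by
  conv_lhs => rw [← Nat.mod_add_div i p, pow_add, Equiv.Perm.mul_apply,
    pow_mul_fix π b p hp (i / p)]

lemma zpow_closure {s : D → D → Prop} (hs : Equivalence s) (π : Equiv.Perm D)
    (h : ∀ x, s x (π x)) : ∀ (n : ℤ) (x : D), s x ((π ^ n) x) := by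
  intro n
  induction n using Int.induction_on with
  | zero => simpa using fun x => hs.refl x
  | succ n ih =>
      intro x
      have e : (π ^ ((n : ℤ) + 1)) x = (π ^ (n : ℤ)) (π x) := by
        rw [zpow_add, zpow_one, Equiv.Perm.mul_apply]
      rw [e]
      exact hs.trans (h x) (ih (π x))
  | pred n ih =>
      intro x
      have e : π ((π ^ (-(n : ℤ) - 1)) x) = (π ^ (-(n : ℤ))) x := by
        have : (π ^ (1 : ℤ)) ((π ^ (-(n : ℤ) - 1)) x) = (π ^ (-(n : ℤ))) x := by
          rw [← Equiv.Perm.mul_apply, ← zpow_add]; norm_num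
        simpa using this
      exact hs.trans (hs.trans (ih x) (hs.symm (by simpa [e] using h ((π ^ (-(n:ℤ) - 1)) x)))) (hs.refl _)

lemma sameCycle_sub {s : D → D → Prop} (hs : Equivalence s) (π : Equiv.Perm D)
    (h : ∀ x, s x (π x)) {x y : D} (hxy : π.SameCycle x y) : s x y := by
  obtain ⟨n, rfl⟩ := hxy
  exact zpow_closure hs π h n x

end Aux

section Join
variable {D : Type} [Fintype D] [DecidableEq D]

def joinRel (r : D → D → Prop) (a b : D) : D → D → Prop :=
  fun x y => r x y ∨ (r x a ∧ r b y) ∨ (r x b ∧ r a y)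

lemma joinRel_equivalence {r : D → D → Prop} (hr : Equivalence r) (a b : D) :
    Equivalence (joinRel r a b) := by
  constructor
  · exact fun x => Or.inl (hr.refl x)
  · rintro x y (h | ⟨h1, h2⟩ | ⟨h1, h2⟩)
    · exact Or.inl (hr.symm h)
    · exact Or.inr (Or.inr ⟨hr.symm h2, hr.symm h1⟩)
    · exact Or.inr (Or.inl ⟨hr.symm h2, hr.symm h1⟩)
  · rintro x y z (h | ⟨h1, h2⟩ | ⟨h1, h2⟩) (g | ⟨g1, g2⟩ | ⟨g1, g2⟩)
    · exact Or.inl (hr.trans h g)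
    · exact Or.inr (Or.inl ⟨hr.trans h g1, g2⟩)
    · exact Or.inr (Or.inr ⟨hr.trans h g1, g2⟩)
    · exact Or.inr (Or.inl ⟨h1, hr.trans h2 g⟩)
    · exact Or.inr (Or.inr ⟨hr.trans h1 (hr.symm (hr.trans h2 g1)),
        hr.trans (hr.symm (hr.trans h2 g1)) g2⟩)
    · exact Or.inl (hr.trans h1 g2)
    · exact Or.inr (Or.inr ⟨h1, hr.trans h2 g⟩)
    · exact Or.inl (hr.trans h1 g2)
    · exact Or.inr (Or.inl ⟨hr.trans h1 (hr.symm (hr.trans h2 g1)),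
        hr.trans (hr.symm (hr.trans h2 g1)) g2⟩)
  
lemma joinRel_self {r : D → D → Prop} (hr : Equivalence r) {a b : D} (hab : r a b) :
    joinRel r a b = r := by
  funext x y
  ext
  constructor
  · rintro (h | ⟨h1, h2⟩ | ⟨h1, h2⟩)
    · exact h
    · exact hr.trans (hr.trans h1 hab) h2
    · exact hr.trans (hr.trans h1 (hr.symm hab)) h2
  · exact Or.inl

lemma ncard_joinRel {r : D → D → Prop} (hr : Equivalence r) {a b : D} (hab : ¬ r a b) :
    (orbSet (joinRel r a b)).ncard + 1 = (orbSet r).ncard := by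
  classical
  set A : Set D := {e | r a e} with hA
  set B : Set D := {e | r b e} with hB
  set S : Set (Set D) := {s | ∃ d, ¬ r d a ∧ ¬ r d b ∧ s = {e | r d e}} with hS
  have class_eq : ∀ d d', r d d' → {e | r d e} = {e | r d' e} := by
    intro d d' h; ext e; exact ⟨fun g => hr.trans (hr.symm h) g, fun g => hr.trans h g⟩
  have horb : orbSet r = insert A (insert B S) := by
    ext s
    constructor
    · rintro ⟨d, rfl⟩
      by_cases hda : r d a
      · exact Or.inl (class_eq d a hda ▸ rfl)
      · by_cases hdb : r d b
        · exact Or.inr (Or.inl (class_eq d b hdb ▸ rfl))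
        · exact Or.inr (Or.inr ⟨d, hda, hdb, rfl⟩)
    · rintro (rfl | rfl | ⟨d, _, _, rfl⟩)
      · exact ⟨a, rfl⟩
      · exact ⟨b, rfl⟩
      · exact ⟨d, rfl⟩
  have hjoin : orbSet (joinRel r a b) = insert (A ∪ B) S := by
    ext s
    constructor
    · rintro ⟨d, rfl⟩
      by_cases hda : r d a
      · left
        ext e
        simp only [joinRel, Set.mem_setOf_eq, Set.mem_union, hA, hB]
        constructor
        · rintro (h | ⟨h1, h2⟩ | ⟨h1, h2⟩)
          · exact Or.inl (hr.trans (hr.symm hda) h)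
          · exact Or.inr h2
          · exact absurd (hr.trans (hr.symm hda) h1) hab
        · rintro (h | h)
          · exact Or.inl (hr.trans hda h)
          · exact Or.inr (Or.inl ⟨hda, h⟩)
      · by_cases hdb : r d b
        · left
          ext e
          simp only [joinRel, Set.mem_setOf_eq, Set.mem_union, hA, hB]
          constructor
          · rintro (h | ⟨h1, h2⟩ | ⟨h1, h2⟩)
            · exact Or.inr (hr.trans (hr.symm hdb) h)
            · exact absurd (hr.trans (hr.symm h1) hdb) hab
            · exact Or.inl h2
          · rintro (h | h)
            · exact Or.inr (Or.inr ⟨hdb, h⟩)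
            · exact Or.inl (hr.trans hdb h)
        · right
          refine ⟨d, hda, hdb, ?_⟩
          ext e
          simp only [joinRel, Set.mem_setOf_eq]
          constructor
          · rintro (h | ⟨h1, h2⟩ | ⟨h1, h2⟩)
            · exact h
            · exact absurd h1 hda
            · exact absurd h1 hdb
          · exact Or.inl
    · rintro (rfl | ⟨d, hda, hdb, rfl⟩)
      · refine ⟨a, ?_⟩
        ext e
        simp only [joinRel, Set.mem_setOf_eq, Set.mem_union, hA, hB]
        constructor
        · rintro (h | h)
          · exact Or.inl h
          · exact Or.inr (Or.inl ⟨hr.refl a, h⟩)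
        · rintro (h | ⟨h1, h2⟩ | ⟨h1, h2⟩)
          · exact Or.inl h
          · exact Or.inr h2
          · exact absurd h1 hab
      · refine ⟨d, ?_⟩
        ext e
        simp only [joinRel, Set.mem_setOf_eq]
        constructor
        · exact Or.inl
        · rintro (h | ⟨h1, h2⟩ | ⟨h1, h2⟩)
          · exact h
          · exact absurd h1 hda
          · exact absurd h1 hdb
  have haA : a ∈ A := hr.refl a
  have hbB : b ∈ B := hr.refl b
  have hS_not_a : ∀ s ∈ S, a ∉ s := by
    rintro s ⟨d, hda, _, rfl⟩ h
    exact hda (by exact h)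
  have hS_not_b : ∀ s ∈ S, b ∉ s := by
    rintro s ⟨d, _, hdb, rfl⟩ h
    exact hdb (by exact h)
  have hAS : A ∉ S := fun h => hS_not_a A h haA
  have hBS : B ∉ S := fun h => hS_not_b B h hbB
  have hABS : A ∪ B ∉ S := fun h => hS_not_a _ h (Or.inl haA)
  have hAB : A ≠ B := by
    intro h
    exact hab (by exact (h ▸ hbB : b ∈ A))
  have hAinsBS : A ∉ insert B S := by
    rintro (h | h)
    · exact hAB (by simpa using h)
    · exact hAS h
  rw [horb, hjoin, Set.ncard_insert_of_notMem hABS (Set.toFinite S),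
    Set.ncard_insert_of_notMem hAinsBS (Set.toFinite _),
    Set.ncard_insert_of_notMem hBS (Set.toFinite S)]

end Join

section Swap
variable {D : Type} [Fintype D] [DecidableEq D]

lemma trav_gen (π : Equiv.Perm D) (a b : D) (j₀ : ℕ)
    (hexcl : ∀ j, 0 < j → j < j₀ → (π ^ j) b ≠ a ∧ (π ^ j) b ≠ b) :
    ∀ j, j < j₀ → ((Equiv.swap a b * π) ^ j) b = (π ^ j) b := by
  intro j
  induction j with
  | zero => simp
  | succ n ih =>
      intro hlt
      have hn : n < j₀ := Nat.lt_of_succ_lt hlt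
      rw [pow_succ', Equiv.Perm.mul_apply, pow_succ', Equiv.Perm.mul_apply,
        ih hn, Equiv.Perm.mul_apply]
      have h1 := hexcl (n + 1) (Nat.succ_pos n) hlt
      rw [pow_succ', Equiv.Perm.mul_apply] at h1
      exact Equiv.swap_apply_of_ne_of_ne h1.1 h1.2

lemma sameCycle_zpow_nat (π : Equiv.Perm D) {x y : D} {i : ℕ} (h : (π ^ i) x = y) :
    π.SameCycle x y := ⟨(i : ℤ), by rw [zpow_natCast]; exact h⟩

end Swap

section SwapMain
variable {D : Type} [Fintype D] [DecidableEq D]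

lemma sameCycle_equivalence (π : Equiv.Perm D) : Equivalence π.SameCycle :=
  ⟨fun _ => Equiv.Perm.SameCycle.refl _ _, Equiv.Perm.SameCycle.symm, Equiv.Perm.SameCycle.trans⟩

/-- The least positive exponent sending `b` into `{a, b}`. -/
lemma exists_ret (π : Equiv.Perm D) (a b : D) :
    ∃ j, 0 < j ∧ ((π ^ j) b = a ∨ (π ^ j) b = b) :=
  ⟨orderOf π, orderOf_pos π, Or.inr (by rw [pow_orderOf_eq_one]; rfl)⟩

/-- Merge case: if `a, b` lie on different cycles of `π`, the cycles of
`swap a b * π` are those of `π` with the cycles of `a` and `b` merged. -/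
lemma sameCycle_swap_mul_of_not {π : Equiv.Perm D} {a b : D}
    (hab : ¬ π.SameCycle a b) (x y : D) :
    (Equiv.swap a b * π).SameCycle x y ↔ joinRel π.SameCycle a b x y := by
  have hne : a ≠ b := fun h => hab (h ▸ Equiv.Perm.SameCycle.refl _ _)
  set ρ := Equiv.swap a b * π with hρ
  set j₀ := Nat.find (exists_ret π a b) with hj₀def
  obtain ⟨hj₀pos, hj₀mem⟩ := Nat.find_spec (exists_ret π a b)
  have hmin : ∀ j, j < j₀ → ¬(0 < j ∧ ((π ^ j) b = a ∨ (π ^ j) b = b)) :=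
    fun j hj => Nat.find_min (exists_ret π a b) hj
  have hnota : ∀ j : ℕ, (π ^ j) b ≠ a := by
    intro j h
    exact hab (sameCycle_zpow_nat π h).symm
  have hexcl : ∀ j, 0 < j → j < j₀ → (π ^ j) b ≠ a ∧ (π ^ j) b ≠ b := by
    intro j hj hjlt
    exact ⟨hnota j, fun h => hmin j hjlt ⟨hj, Or.inr h⟩⟩
  have htrav := trav_gen π a b j₀ hexcl
  have hret : (π ^ j₀) b = b := hj₀mem.resolve_left (hnota j₀)
  -- step A : SameCycle ρ b a
  have hstepA : ρ.SameCycle b a := by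
    obtain ⟨m, hm⟩ : ∃ m, j₀ = m + 1 := ⟨j₀ - 1, (Nat.succ_pred_eq_of_pos hj₀pos).symm⟩
    refine sameCycle_zpow_nat ρ (i := j₀) ?_
    rw [hm, pow_succ', Equiv.Perm.mul_apply, htrav m (by omega)]
    rw [hm, pow_succ', Equiv.Perm.mul_apply] at hret
    rw [hρ, Equiv.Perm.mul_apply, hret]
    exact Equiv.swap_apply_right a b
  -- step (i) : ∀ x, SameCycle ρ x (π x)
  have hstepI : ∀ x, ρ.SameCycle x (π x) := by
    intro x
    have hx : ρ.SameCycle x (ρ x) := ⟨1, by simp⟩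
    have hπρ : π x = Equiv.swap a b (ρ x) := by
      rw [hρ, Equiv.Perm.mul_apply, Equiv.swap_apply_self]
    by_cases h1 : ρ x = a
    · rw [hπρ, h1, Equiv.swap_apply_left]
      exact hx.trans (h1 ▸ hstepA.symm)
    · by_cases h2 : ρ x = b
      · rw [hπρ, h2, Equiv.swap_apply_right]
        exact hx.trans (h2 ▸ hstepA)
      · rw [hπρ, Equiv.swap_apply_of_ne_of_ne h1 h2]
        exact hx
  constructor
  · -- SameCycle ρ ⊆ joinRel
    intro h
    refine sameCycle_sub (joinRel_equivalence (sameCycle_equivalence π) a b) ρ ?_ h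
    intro z
    have hρπ : ρ z = Equiv.swap a b (π z) := by rw [hρ, Equiv.Perm.mul_apply]
    by_cases h1 : π z = a
    · rw [hρπ, h1, Equiv.swap_apply_left]
      exact Or.inr (Or.inl ⟨⟨1, by simpa using h1⟩, Equiv.Perm.SameCycle.refl _ _⟩)
    · by_cases h2 : π z = b
      · rw [hρπ, h2, Equiv.swap_apply_right]
        exact Or.inr (Or.inr ⟨⟨1, by simpa using h2⟩, Equiv.Perm.SameCycle.refl _ _⟩)
      · rw [hρπ, Equiv.swap_apply_of_ne_of_ne h1 h2]
        exact Or.inl ⟨1, by simp⟩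
  · -- joinRel ⊆ SameCycle ρ
    have hsub : ∀ z w, π.SameCycle z w → ρ.SameCycle z w := by
      intro z w hzw
      exact sameCycle_sub (sameCycle_equivalence ρ) π hstepI hzw
    rintro (h | ⟨h1, h2⟩ | ⟨h1, h2⟩)
    · exact hsub _ _ h
    · exact ((hsub _ _ h1).trans hstepA.symm).trans (hsub _ _ h2)
    · exact ((hsub _ _ h1).trans hstepA).trans (hsub _ _ h2)

/-- Split case: if `a, b` lie on the same cycle of `π`, they lie on different
cycles of `swap a b * π`. -/
lemma not_sameCycle_swap_mul {π : Equiv.Perm D} {a b : D} (hne : a ≠ b)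
    (hab : π.SameCycle a b) : ¬ (Equiv.swap a b * π).SameCycle a b := by
  set ρ := Equiv.swap a b * π with hρ
  set j₀ := Nat.find (exists_ret π a b) with hj₀def
  obtain ⟨hj₀pos, hj₀mem⟩ := Nat.find_spec (exists_ret π a b)
  have hmin : ∀ j, j < j₀ → ¬(0 < j ∧ ((π ^ j) b = a ∨ (π ^ j) b = b)) :=
    fun j hj => Nat.find_min (exists_ret π a b) hj
  have hexcl : ∀ j, 0 < j → j < j₀ → (π ^ j) b ≠ a ∧ (π ^ j) b ≠ b := by
    intro j hj hjlt
    exact ⟨fun h => hmin j hjlt ⟨hj, Or.inl h⟩, fun h => hmin j hjlt ⟨hj, Or.inr h⟩⟩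
  have htrav := trav_gen π a b j₀ hexcl
  -- (π ^ j₀) b = a
  have hret : (π ^ j₀) b = a := by
    rcases hj₀mem with h | h
    · exact h
    · exfalso
      obtain ⟨i, hilt, hi⟩ := hab.symm.exists_pow_eq'
      have hired : (π ^ (i % j₀)) b = a := by rw [← pow_mod_apply π b j₀ h i]; exact hi
      rcases Nat.eq_zero_or_pos (i % j₀) with h0 | h0
      · rw [h0] at hired; exact hne (by simpa using hired.symm)
      · exact hmin _ (Nat.mod_lt i hj₀pos) ⟨h0, Or.inl hired⟩
  -- hence (ρ ^ j₀) b = b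
  have hρret : (ρ ^ j₀) b = b := by
    obtain ⟨m, hm⟩ : ∃ m, j₀ = m + 1 := ⟨j₀ - 1, (Nat.succ_pred_eq_of_pos hj₀pos).symm⟩
    rw [hm, pow_succ', Equiv.Perm.mul_apply, htrav m (by omega)]
    rw [hm, pow_succ', Equiv.Perm.mul_apply] at hret
    rw [hρ, Equiv.Perm.mul_apply, hret]
    exact Equiv.swap_apply_left a b
  intro hcon
  obtain ⟨i, hilt, hi⟩ := hcon.symm.exists_pow_eq'
  have hired : (ρ ^ (i % j₀)) b = a := by rw [← pow_mod_apply ρ b j₀ hρret i]; exact hi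
  rcases Nat.eq_zero_or_pos (i % j₀) with h0 | h0
  · rw [h0] at hired; exact hne (by simpa using hired.symm)
  · rw [htrav _ (Nat.mod_lt i hj₀pos)] at hired
    exact hmin _ (Nat.mod_lt i hj₀pos) ⟨h0, Or.inl hired⟩

end SwapMain

section GRel
variable {D : Type} [Fintype D] [DecidableEq D]

lemma orbSet_congr {r r' : D → D → Prop} (h : ∀ x y, r x y ↔ r' x y) :
    orbSet r = orbSet r' := by
  have : r = r' := funext fun x => funext fun y => propext (h x y)
  rw [this]

lemma cc_swap_mul_of_not {π : Equiv.Perm D} {a b : D} (hab : ¬ π.SameCycle a b) :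
    cc (Equiv.swap a b * π) + 1 = cc π := by
  have h := orbSet_congr (sameCycle_swap_mul_of_not hab)
  unfold cc
  rw [h]
  exact ncard_joinRel (sameCycle_equivalence π) hab

lemma cc_swap_mul_of_same {π : Equiv.Perm D} {a b : D} (hne : a ≠ b)
    (hab : π.SameCycle a b) : cc (Equiv.swap a b * π) = cc π + 1 := by
  set ρ := Equiv.swap a b * π with hρ
  have hπ : π = Equiv.swap a b * ρ := by
    rw [hρ, ← mul_assoc, Equiv.swap_mul_self, one_mul]
  have hnot : ¬ ρ.SameCycle a b := not_sameCycle_swap_mul hne hab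
  have h := orbSet_congr (sameCycle_swap_mul_of_not hnot)
  have := ncard_joinRel (sameCycle_equivalence ρ) hnot
  unfold cc
  rw [← hπ] at h
  rw [h]
  omega

def stepRel (σ τ : Equiv.Perm D) : D → D → Prop := fun x y => y = σ x ∨ y = τ x

def gRel (σ τ : Equiv.Perm D) : D → D → Prop := EqvGen (stepRel σ τ)

noncomputable def gcount (σ τ : Equiv.Perm D) : ℕ := (orbSet (gRel σ τ)).ncard

lemma gRel_equivalence (σ τ : Equiv.Perm D) : Equivalence (gRel σ τ) :=
  Relation.EqvGen.is_equivalence _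

lemma gRel_of_eqvGen_sub {r : D → D → Prop} {s : D → D → Prop} (hs : Equivalence s)
    (h : ∀ x y, r x y → s x y) {x y : D} (hxy : EqvGen r x y) : s x y := by
  induction hxy with
  | rel _ _ hr => exact h _ _ hr
  | refl _ => exact hs.refl _
  | symm _ _ _ ih => exact hs.symm ih
  | trans _ _ _ _ _ ih1 ih2 => exact hs.trans ih1 ih2

lemma gRel_step_sigma (σ τ : Equiv.Perm D) (x : D) : gRel σ τ x (σ x) :=
  EqvGen.rel _ _ (Or.inl rfl)

lemma gRel_step_tau (σ τ : Equiv.Perm D) (x : D) : gRel σ τ x (τ x) :=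
  EqvGen.rel _ _ (Or.inr rfl)

lemma gRel_of_sameCycle_sigma (σ τ : Equiv.Perm D) {x y : D} (h : σ.SameCycle x y) :
    gRel σ τ x y :=
  sameCycle_sub (gRel_equivalence σ τ) σ (gRel_step_sigma σ τ) h

lemma gRel_of_sameCycle_tau (σ τ : Equiv.Perm D) {x y : D} (h : τ.SameCycle x y) :
    gRel σ τ x y :=
  sameCycle_sub (gRel_equivalence σ τ) τ (gRel_step_tau σ τ) h

lemma gRel_of_sameCycle_mul (σ τ : Equiv.Perm D) {x y : D} (h : (σ * τ).SameCycle x y) :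
    gRel σ τ x y := by
  refine sameCycle_sub (gRel_equivalence σ τ) (σ * τ) (fun z => ?_) h
  exact (gRel_equivalence σ τ).trans (gRel_step_tau σ τ z) (gRel_step_sigma σ τ (τ z))

/-- The group orbits of `(σ, τ)` are those of `(swap a (σ a) * σ, τ)` with the
orbits of `a` and `σ a` merged. -/
lemma gRel_swap (σ τ : Equiv.Perm D) (a : D) :
    ∀ x y, gRel σ τ x y ↔ joinRel (gRel (Equiv.swap a (σ a) * σ) τ) a (σ a) x y := by
  set b := σ a with hb
  set σ₁ := Equiv.swap a b * σ with hσ₁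
  have hJequiv := joinRel_equivalence (gRel_equivalence σ₁ τ) a b
  have hback : ∀ x, σ x = Equiv.swap a b (σ₁ x) := by
    intro x; rw [hσ₁, Equiv.Perm.mul_apply, Equiv.swap_apply_self]
  have hab : gRel σ τ a b := gRel_step_sigma σ τ a
  have hsub1 : ∀ x y, gRel σ₁ τ x y → gRel σ τ x y := by
    intro x y h
    refine gRel_of_eqvGen_sub (gRel_equivalence σ τ) (fun z w hzw => ?_) h
    rcases hzw with h1 | h1
    · by_cases h2 : σ z = a
      · have : σ₁ z = b := by rw [hσ₁, Equiv.Perm.mul_apply, h2, Equiv.swap_apply_left]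
        rw [h1, this]
        exact (gRel_equivalence σ τ).trans (h2 ▸ gRel_step_sigma σ τ z) hab
      · by_cases h3 : σ z = b
        · have : σ₁ z = a := by rw [hσ₁, Equiv.Perm.mul_apply, h3, Equiv.swap_apply_right]
          rw [h1, this]
          exact (gRel_equivalence σ τ).trans (h3 ▸ gRel_step_sigma σ τ z)
            ((gRel_equivalence σ τ).symm hab)
        · have : σ₁ z = σ z := by
            rw [hσ₁, Equiv.Perm.mul_apply, Equiv.swap_apply_of_ne_of_ne h2 h3]
          rw [h1, this]
          exact gRel_step_sigma σ τ z
    · rw [h1]; exact gRel_step_tau σ τ z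
  intro x y
  constructor
  · intro h
    refine gRel_of_eqvGen_sub hJequiv (fun z w hzw => ?_) h
    rcases hzw with h1 | h1
    · by_cases h2 : σ₁ z = a
      · have hzb : σ z = b := by rw [hback z, h2, Equiv.swap_apply_left]
        rw [h1, hzb]
        exact Or.inr (Or.inl ⟨by rw [← h2]; exact gRel_step_sigma σ₁ τ z, (gRel_equivalence σ₁ τ).refl b⟩)
      · by_cases h3 : σ₁ z = b
        · have hza : σ z = a := by rw [hback z, h3, Equiv.swap_apply_right]
          rw [h1, hza]
          exact Or.inr (Or.inr ⟨by rw [← h3]; exact gRel_step_sigma σ₁ τ z, (gRel_equivalence σ₁ τ).refl a⟩)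
        · have : σ z = σ₁ z := by rw [hback z, Equiv.swap_apply_of_ne_of_ne h2 h3]
          rw [h1, this]
          exact Or.inl (gRel_step_sigma σ₁ τ z)
    · rw [h1]; exact Or.inl (gRel_step_tau σ₁ τ z)
  · rintro (h | ⟨h1, h2⟩ | ⟨h1, h2⟩)
    · exact hsub1 _ _ h
    · exact (gRel_equivalence σ τ).trans ((gRel_equivalence σ τ).trans (hsub1 _ _ h1) hab)
        (hsub1 _ _ h2)
    · exact (gRel_equivalence σ τ).trans ((gRel_equivalence σ τ).trans (hsub1 _ _ h1)
        ((gRel_equivalence σ τ).symm hab)) (hsub1 _ _ h2)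

end GRel

section Key
variable {D : Type} [Fintype D] [DecidableEq D]

lemma cc_one : cc (1 : Equiv.Perm D) = Fintype.card D := by
  unfold cc
  have h : orbSet (1 : Equiv.Perm D).SameCycle = (fun d : D => ({d} : Set D)) '' Set.univ := by
    ext s
    constructor
    · rintro ⟨d, rfl⟩
      refine ⟨d, Set.mem_univ d, ?_⟩
      ext e
      simp [Equiv.Perm.sameCycle_one, eq_comm]
    · rintro ⟨d, _, rfl⟩
      refine ⟨d, ?_⟩
      ext e
      simp [Equiv.Perm.sameCycle_one, eq_comm]
  rw [h, Set.ncard_image_of_injective _ (fun x y h => by simpa using h), Set.ncard_univ,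
    Nat.card_eq_fintype_card]

lemma gRel_one (τ : Equiv.Perm D) : ∀ x y, gRel 1 τ x y ↔ τ.SameCycle x y := by
  intro x y
  constructor
  · intro h
    refine gRel_of_eqvGen_sub (sameCycle_equivalence τ) (fun z w hzw => ?_) h
    rcases hzw with h1 | h1
    · simp only [Equiv.Perm.one_apply] at h1
      exact h1 ▸ Equiv.Perm.SameCycle.refl _ _
    · exact h1 ▸ ⟨1, by simp⟩
  · exact fun h => gRel_of_sameCycle_tau 1 τ h

theorem key_ineq (σ τ : Equiv.Perm D) :
    cc σ + cc τ + cc (σ * τ) ≤ Fintype.card D + 2 * gcount σ τ := by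
  suffices H : ∀ (N : ℕ) (σ τ : Equiv.Perm D), σ.support.card ≤ N →
      cc σ + cc τ + cc (σ * τ) ≤ Fintype.card D + 2 * gcount σ τ from
    H σ.support.card σ τ le_rfl
  intro N
  induction N with
  | zero =>
      intro σ τ hcard
      have hσ : σ = 1 := by
        rw [← Equiv.Perm.support_eq_empty_iff]
        exact Finset.card_eq_zero.mp (Nat.le_zero.mp hcard)
      subst hσ
      rw [one_mul, cc_one]
      have : gcount 1 τ = cc τ := by
        unfold gcount cc
        rw [orbSet_congr (gRel_one τ)]
      omega
  | succ N ih =>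
      intro σ τ hcard
      by_cases hσ1 : σ = 1
      · exact hσ1 ▸ ih 1 τ (by simp [Equiv.Perm.support_one])
      · obtain ⟨a, ha⟩ : ∃ a, σ a ≠ a := by
          by_contra hc
          push_neg at hc
          exact hσ1 (Equiv.ext fun x => by simpa using hc x)
        set b := σ a with hb
        have hne : a ≠ b := Ne.symm ha
        set σ₁ := Equiv.swap a b * σ with hσ₁
        -- support decreases
        have hsupp : σ₁.support ⊆ σ.support.erase a := by
          intro x hx
          rw [Equiv.Perm.mem_support] at hx
          rw [Finset.mem_erase, Equiv.Perm.mem_support]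
          constructor
          · rintro rfl
            apply hx
            rw [hσ₁, Equiv.Perm.mul_apply, ← hb, Equiv.swap_apply_right]
          · intro hfix
            apply hx
            rw [hσ₁, Equiv.Perm.mul_apply, hfix]
            rcases eq_or_ne x a with rfl | hxa
            · exact absurd hfix ha
            · rcases eq_or_ne x b with rfl | hxb
              · exact absurd (σ.injective (hfix.trans hb)) hxa
              · exact Equiv.swap_apply_of_ne_of_ne hxa hxb
        have hcard1 : σ₁.support.card ≤ N := by
          have h1 : (σ.support.erase a).card = σ.support.card - 1 :=
            Finset.card_erase_of_mem (Equiv.Perm.mem_support.mpr ha)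
          have h2 := Finset.card_le_card hsupp
          have h3 : 0 < σ.support.card :=
            Finset.card_pos.mpr ⟨a, Equiv.Perm.mem_support.mpr ha⟩
          omega
        have IH := ih σ₁ τ hcard1
        -- basic identities
        have hccσ : cc σ₁ = cc σ + 1 := cc_swap_mul_of_same hne ⟨1, by simp [hb]⟩
        have hmul : σ * τ = Equiv.swap a b * (σ₁ * τ) := by
          rw [hσ₁, ← mul_assoc, ← mul_assoc, Equiv.swap_mul_self, one_mul]
        have hgrel := gRel_swap σ τ a
        rw [← hb, ← hσ₁] at hgrel
        by_cases hcase : gRel σ₁ τ a b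
        · -- orbits already joined
          have hgcount : gcount σ τ = gcount σ₁ τ := by
            unfold gcount
            rw [orbSet_congr hgrel, joinRel_self (gRel_equivalence σ₁ τ) hcase]
          have hccmul : cc (σ * τ) ≤ cc (σ₁ * τ) + 1 := by
            by_cases hsc : (σ₁ * τ).SameCycle a b
            · rw [hmul, cc_swap_mul_of_same hne hsc]
            · have := cc_swap_mul_of_not hsc
              rw [← hmul] at this
              omega
          omega
        · -- orbits get joined now
          have hnsc : ¬ (σ₁ * τ).SameCycle a b :=
            fun h => hcase (gRel_of_sameCycle_mul σ₁ τ h)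
          have hccmul : cc (σ * τ) + 1 = cc (σ₁ * τ) := by
            have := cc_swap_mul_of_not hnsc
            rw [← hmul] at this
            exact this
          have hgcount : gcount σ τ + 1 = gcount σ₁ τ := by
            unfold gcount
            rw [orbSet_congr hgrel]
            exact ncard_joinRel (gRel_equivalence σ₁ τ) hcase
          omega

end Key

section Count
variable {D : Type} [Fintype D] [DecidableEq D]

lemma cc_regular (π : Equiv.Perm D) (k : ℕ) (hk : 0 < k) (hfix : ∀ x, (π ^ k) x = x)
    (hmoves : ∀ x j, 0 < j → j < k → (π ^ j) x ≠ x) : k * cc π = Fintype.card D := by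
  classical
  set f : D → Finset D := fun d => Finset.univ.filter (fun e => π.SameCycle d e) with hf
  have hmemf : ∀ d e, e ∈ f d ↔ π.SameCycle d e := by
    intro d e; simp [hf]
  set orbF : Finset (Finset D) := Finset.univ.image f with horbF
  -- cc π = orbF.card
  have h1 : cc π = orbF.card := by
    have he : orbSet π.SameCycle = (fun t : Finset D => (↑t : Set D)) '' ↑orbF := by
      ext s
      constructor
      · rintro ⟨d, rfl⟩
        refine ⟨f d, by simp [horbF], ?_⟩
        ext e
        simp [hmemf]
      · rintro ⟨t, ht, rfl⟩
        simp only [horbF, Finset.coe_image, Finset.coe_univ, Set.image_univ,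
          Set.mem_range] at ht
        obtain ⟨d, rfl⟩ := ht
        refine ⟨d, ?_⟩
        ext e
        simp [hmemf]
    rw [cc, he, Set.ncard_image_of_injective _ Finset.coe_injective, Set.ncard_coe_finset]
  -- each class has k elements
  have hclass : ∀ d, (f d).card = k := by
    intro d
    have he : f d = (Finset.range k).image (fun j => (π ^ j) d) := by
      ext e
      simp only [hmemf, Finset.mem_image, Finset.mem_range]
      constructor
      · intro h
        obtain ⟨i, _, hi⟩ := h.exists_pow_eq'
        exact ⟨i % k, Nat.mod_lt i hk, by rw [← pow_mod_apply π d k (hfix d) i]; exact hi⟩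
      · rintro ⟨j, _, rfl⟩
        exact sameCycle_zpow_nat π rfl
    rw [he, Finset.card_image_of_injOn, Finset.card_range]
    have key : ∀ i j : ℕ, i < j → j < k → (π ^ i) d ≠ (π ^ j) d := by
      intro i j hlt hjk heq
      obtain ⟨m, rfl⟩ := Nat.exists_eq_add_of_lt hlt
      rw [show i + m + 1 = i + (m + 1) from Nat.add_assoc i m 1, pow_add,
        Equiv.Perm.mul_apply] at heq
      exact hmoves d (m + 1) (Nat.succ_pos m) (by omega)
        ((π ^ i).injective heq).symm
    intro i hi j hj hij
    simp only [Finset.mem_coe, Finset.mem_range] at hi hj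
    have hij' : (π ^ i) d = (π ^ j) d := hij
    rcases Nat.lt_trichotomy i j with h | h | h
    · exact absurd hij' (key i j h hj)
    · exact h
    · exact absurd hij'.symm (key j i h hi)
  -- fibers are the classes
  have h2 : Fintype.card D = ∑ c ∈ orbF, k := by
    rw [← Finset.card_univ, Finset.card_eq_sum_card_fiberwise
      (fun x (_ : x ∈ Finset.univ) => Finset.mem_image_of_mem f (Finset.mem_univ x))]
    refine Finset.sum_congr rfl ?_
    intro c hc
    obtain ⟨d, _, rfl⟩ := Finset.mem_image.mp hc
    have : Finset.univ.filter (fun x => f x = f d) = f d := by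
      ext x
      simp only [Finset.mem_filter, Finset.mem_univ, true_and, hmemf]
      constructor
      · intro h
        have : x ∈ f x := (hmemf x x).mpr (Equiv.Perm.SameCycle.refl _ _)
        rw [h] at this
        exact (hmemf d x).mp this
      · intro h
        ext e
        simp only [hmemf]
        exact ⟨fun g => h.trans g, fun g => h.symm.trans g⟩
    rw [this, hclass d]
  rw [h1, h2, Finset.sum_const, smul_eq_mul, mul_comm]

lemma cc_prodId (φ : Equiv.Perm D) (φ' : Equiv.Perm (D × Bool))
    (h : ∀ p, φ' p = (φ p.1, p.2)) : cc φ' = 2 * cc φ := by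
  classical
  have hzpow : ∀ (n : ℤ) (p : D × Bool), (φ' ^ n) p = ((φ ^ n) p.1, p.2) := by
    have hinv : ∀ p : D × Bool, φ'⁻¹ p = (φ⁻¹ p.1, p.2) := by
      intro p
      apply φ'.injective
      rw [← Equiv.Perm.mul_apply, mul_inv_cancel, Equiv.Perm.one_apply, h]
      simp
    intro n
    induction n using Int.induction_on with
    | zero => simp
    | succ n ih =>
        intro p
        rw [zpow_add, zpow_one, Equiv.Perm.mul_apply, ih, h]
        simp [zpow_add]
    | pred n ih =>
        intro p
        have : ((-(n : ℤ)) - 1) = -(n : ℤ) + (-1) := by ring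
        rw [this, zpow_add, Equiv.Perm.mul_apply, zpow_neg_one, hinv, ih]
        simp [zpow_add, zpow_neg_one]
  have hsc : ∀ p q : D × Bool, φ'.SameCycle p q ↔ (φ.SameCycle p.1 q.1 ∧ p.2 = q.2) := by
    intro p q
    constructor
    · rintro ⟨n, hn⟩
      rw [hzpow n p] at hn
      exact ⟨⟨n, by rw [← hn]⟩, by rw [← hn]⟩
    · rintro ⟨⟨n, hn⟩, h2⟩
      exact ⟨n, by rw [hzpow n p, hn, h2]⟩
  have himg : orbSet φ'.SameCycle =
      ((fun s : Set D => s ×ˢ ({false} : Set Bool)) '' orbSet φ.SameCycle) ∪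
      ((fun s : Set D => s ×ˢ ({true} : Set Bool)) '' orbSet φ.SameCycle) := by
    ext s
    constructor
    · rintro ⟨⟨d, sb⟩, rfl⟩
      rcases Bool.dichotomy sb with rfl | rfl
      · left
        refine ⟨{e | φ.SameCycle d e}, ⟨d, rfl⟩, ?_⟩
        ext ⟨e, t⟩
        simp only [Set.mem_prod, Set.mem_setOf_eq, Set.mem_singleton_iff, hsc]
        tauto
      · right
        refine ⟨{e | φ.SameCycle d e}, ⟨d, rfl⟩, ?_⟩
        ext ⟨e, t⟩
        simp only [Set.mem_prod, Set.mem_setOf_eq, Set.mem_singleton_iff, hsc]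
        tauto
    · rintro (⟨t, ⟨d, rfl⟩, rfl⟩ | ⟨t, ⟨d, rfl⟩, rfl⟩)
      · refine ⟨(d, false), ?_⟩
        ext ⟨e, t⟩
        simp only [Set.mem_setOf_eq, hsc, Set.mem_prod, Set.mem_singleton_iff]
        tauto
      · refine ⟨(d, true), ?_⟩
        ext ⟨e, t⟩
        simp only [Set.mem_setOf_eq, hsc, Set.mem_prod, Set.mem_singleton_iff]
        tauto
  have hinj : ∀ b : Bool, Function.Injective (fun s : Set D => s ×ˢ ({b} : Set Bool)) := by
    intro b s t hst
    have hst' : s ×ˢ ({b} : Set Bool) = t ×ˢ ({b} : Set Bool) := hst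
    ext x
    constructor
    · intro hx
      have hm : (x, b) ∈ s ×ˢ ({b} : Set Bool) := ⟨hx, rfl⟩
      rw [hst'] at hm
      exact hm.1
    · intro hx
      have hm : (x, b) ∈ t ×ˢ ({b} : Set Bool) := ⟨hx, rfl⟩
      rw [← hst'] at hm
      exact hm.1
  have hdisj : Disjoint ((fun s : Set D => s ×ˢ ({false} : Set Bool)) '' orbSet φ.SameCycle)
      ((fun s : Set D => s ×ˢ ({true} : Set Bool)) '' orbSet φ.SameCycle) := by
    rw [Set.disjoint_left]
    rintro s ⟨t, ⟨d, rfl⟩, rfl⟩ ⟨t', ⟨d', rfl⟩, he⟩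
    have he' : {e | φ.SameCycle d' e} ×ˢ ({true} : Set Bool) =
        {e | φ.SameCycle d e} ×ˢ ({false} : Set Bool) := he
    have h1 : (d, false) ∈ {e | φ.SameCycle d e} ×ˢ ({false} : Set Bool) :=
      ⟨Equiv.Perm.SameCycle.refl _ _, rfl⟩
    rw [← he'] at h1
    exact Bool.false_ne_true h1.2
  rw [cc, himg, Set.ncard_union_eq hdisj (Set.toFinite _) (Set.toFinite _),
    Set.ncard_image_of_injective _ (hinj false), Set.ncard_image_of_injective _ (hinj true)]
  unfold cc
  omega

end Count

section Lift
variable {D : Type} [Fintype D] [DecidableEq D]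

lemma pow2_apply (π : Equiv.Perm D) (x : D) : (π ^ 2) x = π (π x) := by
  rw [pow_succ, pow_one, Equiv.Perm.mul_apply]

lemma pow3_apply (π : Equiv.Perm D) (x : D) : (π ^ 3) x = π (π (π x)) := by
  rw [pow_succ, Equiv.Perm.mul_apply, pow2_apply]

lemma pow4_apply (π : Equiv.Perm D) (x : D) : (π ^ 4) x = π (π (π (π x))) := by
  rw [pow_succ, Equiv.Perm.mul_apply, pow3_apply]

def liftFlip (π : Equiv.Perm D) : Equiv.Perm (D × Bool) where
  toFun p := (π p.1, !p.2)
  invFun p := (π⁻¹ p.1, !p.2)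
  left_inv p := by simp
  right_inv p := by simp

@[simp] lemma liftFlip_apply (π : Equiv.Perm D) (p : D × Bool) :
    liftFlip π p = (π p.1, !p.2) := rfl

end Lift
/-!
A combinatorial map ("plane graph" via rotation system): `D` is the set of darts
(edge-ends); `rot` is the counterclockwise rotation of darts around their vertex
(vertices are `rot`-orbits); `inv` pairs the two darts of each edge
(edges are `inv`-orbits, of size 2).
-/
structure CombMap (D : Type) [Fintype D] [DecidableEq D] where
  rot : Equiv.Perm D
  inv : Equiv.Perm D
  inv_invol : ∀ d, inv (inv d) = d
  inv_ne : ∀ d, inv d ≠ d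

namespace CombMap

variable {D : Type} [Fintype D] [DecidableEq D] (M : CombMap D)

/-- Every vertex has degree 4: each `rot`-orbit has size exactly 4. -/
def FourRegular : Prop :=
  (∀ d, M.rot (M.rot (M.rot (M.rot d))) = d) ∧ (∀ d, M.rot d ≠ d) ∧
    (∀ d, M.rot (M.rot d) ≠ d)

/-- `IsThread d e`: the length-two path consisting of the edge of dart `d`
(traversed from the vertex of `d` to the vertex of `inv d`, the midpoint)
followed by the edge of dart `e` is a thread: `e` is a dart at the midpoint and
the two edges are not contiguous in the rotation at the midpoint. -/
def IsThread (d e : D) : Prop :=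
  M.rot.SameCycle (M.inv d) e ∧ e ≠ M.inv d ∧ e ≠ M.rot (M.inv d) ∧
    M.rot e ≠ M.inv d

/-- Traversing the edge of dart `d` and continuing straight through the vertex
at its far end: the unique continuation of a threaded circuit. -/
def threadStep (d : D) : D := M.rot (M.rot (M.inv d))

/-- A set of darts closed under continuing along threads and under reversal:
closed unions of (undirected) threaded circuits. -/
def ClosedTC (s : Set D) : Prop := ∀ x ∈ s, M.threadStep x ∈ s ∧ M.inv x ∈ s

/-- The set of darts of a single (undirected) threaded circuit: a minimal
nonempty set of darts closed under thread-continuation and reversal. -/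
def Circuit (s : Set D) : Prop :=
  s.Nonempty ∧ M.ClosedTC s ∧ ∀ t ⊆ s, t.Nonempty → M.ClosedTC t → t = s

/-- The number of circuits in the threaded circuit partition. -/
noncomputable def circuitCount : ℕ := Set.ncard {s : Set D | M.Circuit s}

/-- Reachability between darts by walking along edges and around vertices,
avoiding the darts in `A`. -/
def ReachAvoiding (A : Set D) (a b : D) : Prop :=
  Relation.ReflTransGen
    (fun x y => (y = M.rot x ∨ y = M.inv x) ∧ x ∉ A ∧ y ∉ A) a b

/-- The graph is connected. -/
def Connected : Prop := ∀ a b : D, M.ReachAvoiding ∅ a b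

/-- Number of vertices: the number of `rot`-orbits. -/
noncomputable def vertexCount : ℕ :=
  Set.ncard {s : Set D | ∃ d, s = {e | M.rot.SameCycle d e}}

/-- Number of edges: the number of `inv`-orbits. -/
noncomputable def edgeCount : ℕ :=
  Set.ncard {s : Set D | ∃ d, s = {e | M.inv.SameCycle d e}}

/-- Number of faces: the number of orbits of the face permutation `rot ∘ inv`. -/
noncomputable def faceCount : ℕ :=
  Set.ncard {s : Set D | ∃ d, s = {e | (M.rot * M.inv).SameCycle d e}}

/-- The embedding is planar (genus 0): Euler's formula `V - E + F = 2` holds. -/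
def EulerPlanar : Prop :=
  (M.vertexCount : ℤ) - (M.edgeCount : ℤ) + (M.faceCount : ℤ) = 2

end CombMap

/-- The threaded circuit partition of a (connected) 4-regular
plane graph admits a consistent alternating under-over assignment. A thread
with midpoint the vertex of a dart `e` is the opposite pair `{e, rot (rot e)}`,
so an under-over assignment is a map `u` into `{-1, +1}` with
`u (rot (rot e)) = u e`. It is consistent if the two threads at each vertex get
opposite values (`u (rot e) = - u e`), and alternating if the threads used by
consecutive steps of a threaded circuit get opposite values (the step along the
edge of dart `d` uses the thread of `inv d`, and the next step uses the thread
of `inv (threadStep d)`). -/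

theorem threaded_partition_has_consistent_alternating_assignment
    {D : Type} [Fintype D] [DecidableEq D] (M : CombMap D)
    (h4 : M.FourRegular) (hconn : M.Connected) (hpl : M.EulerPlanar) :
    ∃ u : D → ℤ,
      (∀ d, u d = 1 ∨ u d = -1) ∧
      (∀ d, u (M.rot (M.rot d)) = u d) ∧
      (∀ d, u (M.rot d) = - u d) ∧
      (∀ d, u (M.inv (M.threadStep d)) = - u (M.inv d)) := by
  classical
  rcases isEmpty_or_nonempty D with hD | hD
  · exact ⟨fun _ => 1, fun d => (hD.false d).elim, fun d => (hD.false d).elim,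
      fun d => (hD.false d).elim, fun d => (hD.false d).elim⟩
  obtain ⟨d₀⟩ := hD
  obtain ⟨h4a, h4b, h4c⟩ := h4
  have h4d : ∀ d, M.rot (M.rot (M.rot d)) ≠ d := by
    intro d hc
    have h := congrArg M.rot hc
    rw [h4a d] at h
    exact h4b d h.symm
  set σ' : Equiv.Perm (D × Bool) := liftFlip M.rot with hσ'
  set α' : Equiv.Perm (D × Bool) := liftFlip M.inv with hα'
  have E := gRel_equivalence σ' α'
  have hface : ∀ p : D × Bool, (σ' * α') p = ((M.rot * M.inv) p.1, p.2) := by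
    intro p
    simp [hσ', hα', Equiv.Perm.mul_apply]
  by_cases htot : ∀ z w : D × Bool, gRel σ' α' z w
  · exfalso
    have hn4 : 4 * M.vertexCount = Fintype.card D := by
      have hv : M.vertexCount = cc M.rot := rfl
      rw [hv]
      refine cc_regular M.rot 4 (by norm_num) (fun x => by rw [pow4_apply]; exact h4a x) ?_
      intro x j hj hjk
      interval_cases j
      · simpa using h4b x
      · rw [pow2_apply]; exact h4c x
      · rw [pow3_apply]; exact h4d x
    have hn2 : 2 * M.edgeCount = Fintype.card D := by
      have hv : M.edgeCount = cc M.inv := rfl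
      rw [hv]
      refine cc_regular M.inv 2 (by norm_num) (fun x => by rw [pow2_apply]; exact M.inv_invol x) ?_
      intro x j hj hjk
      interval_cases j
      simpa using M.inv_ne x
    have hcs4 : 4 * cc σ' = Fintype.card (D × Bool) := by
      refine cc_regular σ' 4 (by norm_num) ?_ ?_
      · intro p
        rw [pow4_apply]
        simp [hσ', h4a p.1]
      · intro p j hj hjk
        interval_cases j
        · intro h
          exact h4b p.1 (congrArg Prod.fst (by simpa [hσ'] using h))
        · rw [pow2_apply]
          intro h
          exact h4c p.1 (congrArg Prod.fst (by simpa [hσ'] using h))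
        · rw [pow3_apply]
          intro h
          have := congrArg Prod.snd h
          simp [hσ'] at this
    have hca2 : 2 * cc α' = Fintype.card (D × Bool) := by
      refine cc_regular α' 2 (by norm_num) ?_ ?_
      · intro p
        rw [pow2_apply]
        simp [hα', M.inv_invol p.1]
      · intro p j hj hjk
        interval_cases j
        intro h
        have := congrArg Prod.snd h
        simp [hα'] at this
    have hfcc : cc (σ' * α') = 2 * M.faceCount := by
      have hv : M.faceCount = cc (M.rot * M.inv) := rfl
      rw [hv]
      exact cc_prodId _ _ hface
    have hgc : gcount σ' α' = 1 := by
      unfold gcount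
      have horb : orbSet (gRel σ' α') = {Set.univ} := by
        ext s
        constructor
        · rintro ⟨p, rfl⟩
          simp only [Set.mem_singleton_iff]
          ext q
          simp [htot p q]
        · intro hs
          simp only [Set.mem_singleton_iff] at hs
          subst hs
          refine ⟨(d₀, false), ?_⟩
          ext q
          simp [htot (d₀, false) q]
      rw [horb, Set.ncard_singleton]
    have hkey := key_ineq σ' α'
    rw [hgc] at hkey
    have hcard' : Fintype.card (D × Bool) = 2 * Fintype.card D := by
      simp [Fintype.card_prod, mul_comm]
    unfold CombMap.EulerPlanar at hpl
    omega
  · -- construct the assignment from the second component of the orbit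
    set x₀ : D × Bool := (d₀, false) with hx₀
    have hstep_rot : ∀ (d : D) (s : Bool), gRel σ' α' (d, s) (M.rot d, !s) :=
      fun d s => EqvGen.rel _ _ (Or.inl rfl)
    have hstep_inv : ∀ (d : D) (s : Bool), gRel σ' α' (d, s) (M.inv d, !s) :=
      fun d s => EqvGen.rel _ _ (Or.inr rfl)
    have hflip : ∀ z w, gRel σ' α' z w → gRel σ' α' (z.1, !z.2) (w.1, !w.2) := by
      intro z w h
      induction h with
      | rel x y hxy =>
          apply EqvGen.rel
          rcases hxy with h1 | h1
          · left; rw [h1]; simp [hσ']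
          · right; rw [h1]; simp [hα']
      | refl x => exact EqvGen.refl _
      | symm x y _ ih => exact EqvGen.symm _ _ ih
      | trans x y z _ _ ih1 ih2 => exact EqvGen.trans _ _ _ ih1 ih2
    have hreach : ∀ d : D, ∃ s, gRel σ' α' x₀ (d, s) := by
      intro d
      have hc := hconn d₀ d
      induction hc with
      | refl => exact ⟨false, E.refl _⟩
      | tail _ hstep ih =>
          obtain ⟨s, hs⟩ := ih
          rcases hstep.1 with h1 | h1
          · exact ⟨!s, E.trans hs (h1 ▸ hstep_rot _ s)⟩
          · exact ⟨!s, E.trans hs (h1 ▸ hstep_inv _ s)⟩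
    have hone : ∀ d, ¬(gRel σ' α' x₀ (d, false) ∧ gRel σ' α' x₀ (d, true)) := by
      rintro d ⟨hf, ht⟩
      apply htot
      have h01 : gRel σ' α' x₀ (d₀, true) := E.trans ht (E.symm (hflip _ _ hf))
      have hall : ∀ w : D × Bool, gRel σ' α' x₀ w := by
        rintro ⟨e, t⟩
        obtain ⟨s, hs⟩ := hreach e
        by_cases hst : s = t
        · exact hst ▸ hs
        · have ht' : t = !s := by cases s <;> cases t <;> simp_all
          rw [ht']
          exact E.trans h01 (hflip _ _ hs)
      exact fun z w => E.trans (E.symm (hall z)) (hall w)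
    set u : D → ℤ := fun d => if gRel σ' α' x₀ (d, false) then 1 else -1 with hu
    have hiff_rot : ∀ d, gRel σ' α' x₀ (M.rot d, false) ↔ ¬ gRel σ' α' x₀ (d, false) := by
      intro d
      constructor
      · intro hr hfd
        exact hone d ⟨hfd, E.trans hr (E.symm (hstep_rot d true))⟩
      · intro hn
        obtain ⟨s, hs⟩ := hreach d
        cases s with
        | false => exact absurd hs hn
        | true => exact E.trans hs (hstep_rot d true)
    have hiff_inv : ∀ d, gRel σ' α' x₀ (M.inv d, false) ↔ ¬ gRel σ' α' x₀ (d, false) := by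
      intro d
      constructor
      · intro hr hfd
        exact hone d ⟨hfd, E.trans hr (E.symm (hstep_inv d true))⟩
      · intro hn
        obtain ⟨s, hs⟩ := hreach d
        cases s with
        | false => exact absurd hs hn
        | true => exact E.trans hs (hstep_inv d true)
    have hur : ∀ d, u (M.rot d) = -u d := by
      intro d
      simp only [hu]
      by_cases h : gRel σ' α' x₀ (d, false)
      · rw [if_neg (fun hr => (hiff_rot d).mp hr h), if_pos h]
      · rw [if_pos ((hiff_rot d).mpr h), if_neg h]
        norm_num
    have hui : ∀ d, u (M.inv d) = -u d := by
      intro d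
      simp only [hu]
      by_cases h : gRel σ' α' x₀ (d, false)
      · rw [if_neg (fun hr => (hiff_inv d).mp hr h), if_pos h]
      · rw [if_pos ((hiff_inv d).mpr h), if_neg h]
        norm_num
    have hu2 : ∀ d, u (M.rot (M.rot d)) = u d := by
      intro d
      rw [hur, hur, neg_neg]
    refine ⟨u, ?_, hu2, hur, ?_⟩
    · intro d
      simp only [hu]
      by_cases h : gRel σ' α' x₀ (d, false)
      · exact Or.inl (if_pos h)
      · exact Or.inr (if_neg h)
    · intro d
      rw [hui]
      unfold CombMap.threadStep
      rw [hu2]
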